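/- Let K ≥ 1 and let b₁, ..., b_K be real numbers. Then the vector v* ∈ Δ_K with coordinates v*_i = exp(−b_i) / Σ_{j=1}^K exp(−b_j) is a minimizer of the minimax problem min_{v ∈ Δ_K} max_{m ∈ Δ_K} Σ_{i=1}^K ( −log(v_i) − b_i ) m_i. (Consequently, taking b_i = φ_i^{*c}(x̃) for a dual optimizer (φ_i^*), the softmax formula f_i^*(x̃) = exp(−φ_i^{*c}(x̃)) / Σ_j exp(−φ_j^{*c}(x̃)) defines an optimal robust classifier for the adversarial problem with the cross-entropy loss.) -/

import Mathlib

open scoped ENNReal BigOperators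

noncomputable section

/-- Cross-entropy loss `ℓ_ce(v,i) = −log v_i` as a function of the `i`-th
coordinate `t = v_i ∈ [0,1]`, with value `+∞` at `t = 0`. -/
def lossCE (t : ℝ) : EReal := if 0 < t then ((-Real.log t : ℝ) : EReal) else ⊤

/-- The inner max-objective `max_{m ∈ Δ_K} ∑_i (ℓ_ce(v,i) − b_i) m_i`. -/
def ceMinimaxObj {K : ℕ} (b : Fin K → ℝ) (v : Fin K → ℝ) : EReal :=
  ⨆ m ∈ stdSimplex ℝ (Fin K),
    ∑ i, (m i : EReal) * (lossCE (v i) - (b i : EReal))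

/-- Corollary 1.8 (finite-dimensional form): the softmax vector
`v*_i = exp(−b_i)/∑_j exp(−b_j)` minimizes
`min_{v ∈ Δ_K} max_{m ∈ Δ_K} ∑_i (−log v_i − b_i) m_i`. -/
theorem statement2 {K : ℕ} (hK : 1 ≤ K) (b : Fin K → ℝ) :
    (fun i => Real.exp (-(b i)) / ∑ j, Real.exp (-(b j))) ∈ stdSimplex ℝ (Fin K) ∧
    ∀ v ∈ stdSimplex ℝ (Fin K),
      ceMinimaxObj b (fun i => Real.exp (-(b i)) / ∑ j, Real.exp (-(b j)))
        ≤ ceMinimaxObj b v := by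
  haveI : Nonempty (Fin K) := Fin.pos_iff_nonempty.mp hK
  set S : ℝ := ∑ j, Real.exp (-(b j)) with hSdef
  have hSpos : 0 < S :=
    Finset.sum_pos (fun j _ => Real.exp_pos _) Finset.univ_nonempty
  have hmem : (fun i => Real.exp (-(b i)) / S) ∈ stdSimplex ℝ (Fin K) := by
    constructor
    · intro i
      exact div_nonneg (Real.exp_pos _).le hSpos.le
    · rw [← Finset.sum_div, ← hSdef, div_self hSpos.ne']
  refine ⟨hmem, ?_⟩
  intro v hv
  -- value at softmax: each term is log S
  have hterm : ∀ i : Fin K,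
      lossCE (Real.exp (-(b i)) / S) - (b i : EReal) = ((Real.log S : ℝ) : EReal) := by
    intro i
    have hpos : 0 < Real.exp (-(b i)) / S := div_pos (Real.exp_pos _) hSpos
    have hlog : Real.log (Real.exp (-(b i)) / S) = -(b i) - Real.log S := by
      rw [Real.log_div (Real.exp_pos _).ne' hSpos.ne', Real.log_exp]
    rw [lossCE, if_pos hpos, hlog, ← EReal.coe_sub]
    norm_num
  -- upper bound for softmax
  have hupper : ceMinimaxObj b (fun i => Real.exp (-(b i)) / S)
      ≤ ((Real.log S : ℝ) : EReal) := by
    refine iSup₂_le fun m hm => ?_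
    calc ∑ i, (m i : EReal) * (lossCE (Real.exp (-(b i)) / S) - (b i : EReal))
        = ∑ i, ((m i * Real.log S : ℝ) : EReal) := by
          refine Finset.sum_congr rfl fun i _ => ?_
          rw [hterm i, ← EReal.coe_mul]
      _ = (((∑ i, m i * Real.log S : ℝ)) : EReal) := by
          induction (Finset.univ : Finset (Fin K)) using Finset.induction_on with
          | empty => simp
          | insert _ _ hnot ih =>
              rw [Finset.sum_insert hnot, Finset.sum_insert hnot, ih, EReal.coe_add]
      _ ≤ ((Real.log S : ℝ) : EReal) := by
          rw [← Finset.sum_mul, hm.2, one_mul]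
  -- lower bound for arbitrary v
  have hexists : ∃ i, v i ≤ Real.exp (-(b i)) / S := by
    by_contra h
    push_neg at h
    have h1 : ∑ i, Real.exp (-(b i)) / S < ∑ i, v i :=
      Finset.sum_lt_sum_of_nonempty Finset.univ_nonempty fun i _ => h i
    rw [hv.2, ← Finset.sum_div, ← hSdef, div_self hSpos.ne'] at h1
    exact lt_irrefl _ h1
  obtain ⟨i₀, hi₀⟩ := hexists
  set m : Fin K → ℝ := fun i => if i = i₀ then 1 else 0 with hmdef
  have hmΔ : m ∈ stdSimplex ℝ (Fin K) := by
    constructor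
    · intro i; simp only [hmdef]; split <;> norm_num
    · simp [hmdef]
  have hsum : ∑ i, (m i : EReal) * (lossCE (v i) - (b i : EReal))
      = lossCE (v i₀) - (b i₀ : EReal) := by
    rw [Finset.sum_eq_single i₀]
    · simp [hmdef]
    · intro i _ hi
      simp [hmdef, hi]
    · intro h
      exact absurd (Finset.mem_univ i₀) h
  have hkey : ((Real.log S : ℝ) : EReal) ≤ lossCE (v i₀) - (b i₀ : EReal) := by
    rcases lt_or_eq_of_le (hv.1 i₀) with hpos | hzero
    · rw [lossCE, if_pos hpos, ← EReal.coe_sub, EReal.coe_le_coe_iff]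
      have hlog : Real.log (v i₀) ≤ -(b i₀) - Real.log S := by
        calc Real.log (v i₀) ≤ Real.log (Real.exp (-(b i₀)) / S) :=
              Real.log_le_log hpos hi₀
          _ = -(b i₀) - Real.log S := by
              rw [Real.log_div (Real.exp_pos _).ne' hSpos.ne', Real.log_exp]
      linarith
    · rw [lossCE, if_neg (by rw [← hzero]; exact lt_irrefl 0), EReal.top_sub_coe]
      exact le_top
  have hlower : ((Real.log S : ℝ) : EReal) ≤ ceMinimaxObj b v := by
    refine le_trans (hkey.trans_eq hsum.symm) ?_
    exact le_iSup₂ (f := fun m (_ : m ∈ stdSimplex ℝ (Fin K)) =>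
      ∑ i, (m i : EReal) * (lossCE (v i) - (b i : EReal))) m hmΔ
  exact hupper.trans hlower
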